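/- If Γ is a nonempty collection of maximum independent sets of G, then 2α(G) ≤ |⋃Γ| + |⋂Γ| ≤ 2(|V(G)| − μ(G)). -/

import Mathlib

open Set

variable {V : Type*}

/-- `S` is an independent set of `G`. -/
def IndepSet (G : SimpleGraph V) (S : Set V) : Prop :=
  ∀ x ∈ S, ∀ y ∈ S, ¬ G.Adj x y

/-- The independence number `α(G)`. -/
noncomputable def alpha (G : SimpleGraph V) : ℕ :=
  sSup {n | ∃ S : Set V, IndepSet G S ∧ S.ncard = n}

/-- `S` is a maximum independent set of `G`. -/
def MaxIndep (G : SimpleGraph V) (S : Set V) : Prop :=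
  IndepSet G S ∧ S.ncard = alpha G

/-- `Ω(G)`, the family of all maximum independent sets. -/
def Omega (G : SimpleGraph V) : Set (Set V) := {S | MaxIndep G S}

/-- `core(G)`, the intersection of all maximum independent sets. -/
def core (G : SimpleGraph V) : Set V := ⋂₀ Omega G

/-- `corona(G)`, the union of all maximum independent sets. -/
def corona (G : SimpleGraph V) : Set V := ⋃₀ Omega G

/-- The matching number `μ(G)`. -/
noncomputable def matchNum (G : SimpleGraph V) : ℕ :=
  sSup {n | ∃ M : G.Subgraph, M.IsMatching ∧ M.edgeSet.ncard = n}

/-- A matching from `X` into `Y`: an injection `f` on `X` into `Y` such that each `x ∈ X`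
is adjacent to `f x` and the edges `{x, f x}` are pairwise disjoint. -/
def MatchingFrom (G : SimpleGraph V) (X Y : Set V) : Prop :=
  ∃ f : V → V, Set.InjOn f X ∧ (∀ x ∈ X, f x ∈ Y ∧ G.Adj x (f x)) ∧
    ∀ x ∈ X, ∀ y ∈ X, x ≠ y → f x ≠ y

section aux
variable [Fintype V] (G : SimpleGraph V)

lemma indep_ncard_le_alpha {S : Set V} (hS : IndepSet G S) : S.ncard ≤ alpha G := by
  apply le_csSup
  · refine ⟨Fintype.card V, ?_⟩
    rintro n ⟨T, -, rfl⟩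
    calc T.ncard ≤ (Set.univ : Set V).ncard := Set.ncard_le_ncard (Set.subset_univ T) (Set.toFinite _)
    _ = Fintype.card V := by rw [Set.ncard_univ, Nat.card_eq_fintype_card]
  · exact ⟨S, hS, rfl⟩

/-- Hall-based injection from `A \ B` into `B \ A` for maximum independent sets. -/
lemma exists_inj_of_maxIndep {A B : Set V} (hA : MaxIndep G A) (hB : MaxIndep G B) :
    ∃ f : V → V, Set.InjOn f (A \ B) ∧ ∀ x ∈ A \ B, f x ∈ B \ A ∧ G.Adj x (f x) := by
  classical
  set D : Set V := A \ B with hD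
  let t : D → Finset V := fun x => G.neighborFinset x.1 ∩ (B \ A).toFinset
  have hall : ∀ s : Finset D, s.card ≤ (s.biUnion t).card := by
    intro s
    set X : Set V := Subtype.val '' (↑s : Set D) with hX
    have hXD : X ⊆ D := by rintro v ⟨x, hx, rfl⟩; exact x.2
    set N : Set V := ↑(s.biUnion t) with hN
    -- N ⊆ B \ A and every b ∈ B adjacent to some x ∈ X lies in N
    have hNB : N ⊆ B \ A := by
      intro b hb
      simp only [hN, Finset.coe_biUnion, Set.mem_iUnion] at hb
      obtain ⟨x, hx, hbx⟩ := hb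
      simp only [t, Finset.mem_coe, Finset.mem_inter, Set.mem_toFinset] at hbx
      exact hbx.2
    -- the swap set
    have hBind : IndepSet G ((B \ N) ∪ X) := by
      intro u hu v hv
      rcases hu with hu | hu <;> rcases hv with hv | hv
      · exact hB.1 u hu.1 v hv.1
      · -- u ∈ B \ N, v ∈ X
        intro hadj
        have hvD := hXD hv
        have huN : u ∈ N := by
          by_cases huA : u ∈ A
          · exact ((hA.1 u huA v hvD.1) hadj).elim
          · obtain ⟨x, hxs, rfl⟩ := hv
            simp only [hN, Finset.coe_biUnion, Set.mem_iUnion]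
            refine ⟨x, by simpa using hxs, ?_⟩
            simp only [t, Finset.mem_coe, Finset.mem_inter, Set.mem_toFinset,
              SimpleGraph.mem_neighborFinset]
            exact ⟨hadj.symm, hu.1, huA⟩
        exact hu.2 huN
      · -- u ∈ X, v ∈ B \ N : symmetric
        intro hadj
        have huD := hXD hu
        by_cases hvA : v ∈ A
        · exact hA.1 u huD.1 v hvA hadj
        · apply hv.2
          obtain ⟨x, hxs, rfl⟩ := hu
          simp only [hN, Finset.coe_biUnion, Set.mem_iUnion]
          refine ⟨x, by simpa using hxs, ?_⟩
          simp only [t, Finset.mem_coe, Finset.mem_inter, Set.mem_toFinset,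
            SimpleGraph.mem_neighborFinset]
          exact ⟨hadj, hv.1, hvA⟩
      · exact fun hadj => (hA.1 u (hXD hu).1 v (hXD hv).1) hadj
    -- cardinality comparison
    have hXB : Disjoint X (B \ N) := by
      rw [Set.disjoint_left]
      intro v hv hvB
      exact (hXD hv).2 hvB.1
    have hcard : ((B \ N) ∪ X).ncard ≤ B.ncard := by
      rw [hB.2]; exact indep_ncard_le_alpha G hBind
    have hNBsub : N ⊆ B := fun b hb => (hNB hb).1
    have h1 : ((B \ N) ∪ X).ncard = (B \ N).ncard + X.ncard :=
      Set.ncard_union_eq hXB.symm (Set.toFinite _) (Set.toFinite _)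
    have h2 : (B \ N).ncard = B.ncard - N.ncard :=
      Set.ncard_diff hNBsub (Set.toFinite _)
    have h3 : N.ncard ≤ B.ncard := Set.ncard_le_ncard hNBsub (Set.toFinite _)
    have hXcard : X.ncard = s.card := by
      rw [hX]
      rw [Set.ncard_image_of_injective _ Subtype.val_injective]
      simp [Set.ncard_coe_finset]
    have hNcard : N.ncard = (s.biUnion t).card := by
      rw [hN, Set.ncard_coe_finset]
    omega
  obtain ⟨f0, hf0inj, hf0mem⟩ := (Finset.all_card_le_biUnion_card_iff_exists_injective t).mp hall
  refine ⟨fun v => if h : v ∈ D then f0 ⟨v, h⟩ else v, ?_, ?_⟩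
  · intro u hu v hv huv
    simp only [dif_pos hu, dif_pos hv] at huv
    exact Subtype.mk_eq_mk.mp (hf0inj huv)
  · intro x hx
    simp only [dif_pos hx]
    have := hf0mem ⟨x, hx⟩
    simp only [t, Finset.mem_inter, Set.mem_toFinset, SimpleGraph.mem_neighborFinset] at this
    exact ⟨this.2, this.1⟩

end aux

section aux2
variable [Fintype V] (G : SimpleGraph V)

lemma step_ineq {Γ : Set (Set V)} (hΓ : Γ ⊆ Omega G) {A B : Set V} (hAΓ : A ∈ Γ)
    (hB : B ∈ Omega G) : (⋂₀ Γ \ B).ncard ≤ (B \ ⋃₀ Γ).ncard := by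
  obtain ⟨f, hfinj, hfmem⟩ := exists_inj_of_maxIndep G (hΓ hAΓ) hB
  have hIA : ⋂₀ Γ ⊆ A := Set.sInter_subset_of_mem hAΓ
  have hsub : ⋂₀ Γ \ B ⊆ A \ B := fun x hx => ⟨hIA hx.1, hx.2⟩
  apply Set.ncard_le_ncard_of_injOn f
  · intro x hx
    obtain ⟨hf1, hf2⟩ := hfmem x (hsub hx)
    refine ⟨hf1.1, ?_⟩
    rintro ⟨C, hCΓ, hfC⟩
    have hxC : x ∈ C := hx.1 C hCΓ
    exact (hΓ hCΓ).1 x hxC (f x) hfC hf2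
  · exact hfinj.mono hsub

lemma first_ineq {Γ : Set (Set V)} (hΓ : Γ ⊆ Omega G) (hne : Γ.Nonempty) :
    2 * alpha G ≤ (⋃₀ Γ).ncard + (⋂₀ Γ).ncard := by
  refine Set.Finite.induction_on (motive := fun Γ _ => Γ ⊆ Omega G → Γ.Nonempty →
      2 * alpha G ≤ (⋃₀ Γ).ncard + (⋂₀ Γ).ncard) Γ (Set.toFinite Γ) ?_ ?_ hΓ hne
  · exact fun _ h => absurd h (by simp)
  · rintro B Γ0 hBΓ0 hΓ0fin IH hΓ' -
    have hBΩ : B ∈ Omega G := hΓ' (Set.mem_insert B Γ0)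
    have hΓ0 : Γ0 ⊆ Omega G := fun S hS => hΓ' (Set.mem_insert_of_mem B hS)
    rcases Γ0.eq_empty_or_nonempty with rfl | hne0
    · rw [Set.insert_eq, Set.union_empty, Set.sUnion_singleton,
        Set.sInter_singleton, hBΩ.2]
      omega
    · obtain ⟨A, hA⟩ := hne0
      have IH' := IH hΓ0 ⟨A, hA⟩
      have hstep := step_ineq G hΓ0 hA hBΩ
      rw [Set.sUnion_insert, Set.sInter_insert]
      set U := ⋃₀ Γ0
      set I := ⋂₀ Γ0
      have h1 : (B ∪ U).ncard = (B \ U).ncard + U.ncard := by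
        rw [← Set.ncard_union_eq disjoint_sdiff_left (Set.toFinite _) (Set.toFinite _),
          Set.diff_union_self]
      have h2 : (I ∩ B).ncard + (I \ B).ncard = I.ncard :=
        Set.ncard_inter_add_ncard_diff_eq_ncard I B (Set.toFinite _)
      have h3 : (B ∩ I).ncard = (I ∩ B).ncard := by rw [Set.inter_comm]
      omega

end aux2

section aux3
variable [Fintype V] (G : SimpleGraph V)

lemma exists_max_matching :
    ∃ M : G.Subgraph, M.IsMatching ∧ M.edgeSet.ncard = matchNum G := by
  have hne : {n | ∃ M : G.Subgraph, M.IsMatching ∧ M.edgeSet.ncard = n}.Nonempty := by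
    refine ⟨0, ⊥, ?_, ?_⟩
    · intro v hv
      simp only [SimpleGraph.Subgraph.verts_bot, Set.mem_empty_iff_false] at hv
    · simp [SimpleGraph.Subgraph.edgeSet_bot]
  have hbdd : BddAbove {n | ∃ M : G.Subgraph, M.IsMatching ∧ M.edgeSet.ncard = n} := by
    refine ⟨Fintype.card (Sym2 V), ?_⟩
    rintro n ⟨M, -, rfl⟩
    calc M.edgeSet.ncard ≤ (Set.univ : Set (Sym2 V)).ncard :=
          Set.ncard_le_ncard (Set.subset_univ _) (Set.toFinite _)
      _ = Fintype.card (Sym2 V) := by rw [Set.ncard_univ, Nat.card_eq_fintype_card]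
  exact Nat.sSup_mem hne hbdd

lemma matching_verts_ncard (M : G.Subgraph) (hM : M.IsMatching) :
    M.verts.ncard = 2 * M.edgeSet.ncard := by
  classical
  set p : V → V := fun v => if h : ∃ w, M.Adj v w then h.choose else v with hp
  have hpadj : ∀ v ∈ M.verts, M.Adj v (p v) := by
    intro v hv
    obtain ⟨w, hw, -⟩ := hM hv
    have hex : ∃ w, M.Adj v w := ⟨w, hw⟩
    show M.Adj v (p v)
    rw [hp]
    simp only [dif_pos hex]
    exact hex.choose_spec
  have hpu : ∀ v ∈ M.verts, ∀ w, M.Adj v w → p v = w := by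
    intro v hv w hw
    obtain ⟨w', -, hw'⟩ := hM hv
    rw [hw' _ (hpadj v hv), hw' _ hw]
  have hvfin := Set.toFinite M.verts
  have hefin := Set.toFinite M.edgeSet
  set vs := hvfin.toFinset with hvs
  set es := hefin.toFinset with hes
  have hq : ∀ v ∈ vs, s(v, p v) ∈ es := by
    intro v hv
    rw [hes, Set.Finite.mem_toFinset, SimpleGraph.Subgraph.mem_edgeSet]
    exact hpadj v (by rwa [hvs, Set.Finite.mem_toFinset] at hv)
  have hsum := Finset.card_eq_sum_card_fiberwise hq
  have hfib : ∀ e ∈ es, (vs.filter (fun v => s(v, p v) = e)).card = 2 := by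
    intro e he
    induction e with
    | _ a b =>
      rw [hes, Set.Finite.mem_toFinset, SimpleGraph.Subgraph.mem_edgeSet] at he
      have hab : a ≠ b := (M.adj_sub he).ne
      have : vs.filter (fun v => s(v, p v) = s(a, b)) = {a, b} := by
        ext v
        simp only [Finset.mem_filter, hvs, Set.Finite.mem_toFinset, Finset.mem_insert,
          Finset.mem_singleton]
        constructor
        · rintro ⟨hv, hqv⟩
          rw [Sym2.eq_iff] at hqv
          rcases hqv with ⟨h1, -⟩ | ⟨h1, -⟩
          · exact Or.inl h1
          · exact Or.inr h1
        · rintro (rfl | rfl)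
          · have hv : v ∈ M.verts := M.edge_vert he
            exact ⟨hv, by rw [hpu v hv b he]⟩
          · have hv : v ∈ M.verts := M.edge_vert he.symm
            refine ⟨hv, ?_⟩
            rw [hpu v hv a he.symm, Sym2.eq_swap]
      rw [this, Finset.card_insert_of_notMem (by simpa using hab), Finset.card_singleton]
  rw [Finset.sum_congr rfl hfib, Finset.sum_const, smul_eq_mul] at hsum
  rw [Set.ncard_eq_toFinset_card _ hvfin, Set.ncard_eq_toFinset_card _ hefin, ← hvs, ← hes,
    hsum, mul_comm]

lemma second_ineq {Γ : Set (Set V)} (hΓ : Γ ⊆ Omega G) :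
    (⋃₀ Γ).ncard + (⋂₀ Γ).ncard ≤ 2 * (Fintype.card V - matchNum G) := by
  classical
  obtain ⟨M, hM, hMcard⟩ := exists_max_matching G
  set U := ⋃₀ Γ with hU
  set I := ⋂₀ Γ with hI
  set p : V → V := fun v => if h : ∃ w, M.Adj v w then h.choose else v with hp
  have hpadj : ∀ v ∈ M.verts, M.Adj v (p v) := by
    intro v hv
    obtain ⟨w, hw, -⟩ := hM hv
    have hex : ∃ w, M.Adj v w := ⟨w, hw⟩
    show M.Adj v (p v)
    rw [hp]
    simp only [dif_pos hex]
    exact hex.choose_spec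
  -- p is injective on M.verts
  have hpinj : Set.InjOn p M.verts := by
    intro u hu v hv huv
    have h1 : M.Adj (p u) u := (hpadj u hu).symm
    have h2 : M.Adj (p u) v := huv ▸ (hpadj v hv).symm
    obtain ⟨w', -, hw'⟩ := hM (M.edge_vert h1)
    exact (hw' u h1).trans (hw' v h2).symm
  -- p maps M.verts ∩ I into Uᶜ
  have hmaps : ∀ v ∈ M.verts ∩ I, p v ∈ Uᶜ := by
    rintro v ⟨hv, hvI⟩ 
    rintro ⟨C, hCΓ, hpC⟩
    have hvC : v ∈ C := hvI C hCΓ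
    exact (hΓ hCΓ).1 v hvC (p v) hpC (M.adj_sub (hpadj v hv))
  have e1 : (M.verts ∩ I).ncard ≤ (Uᶜ : Set V).ncard := by
    apply Set.ncard_le_ncard_of_injOn p hmaps (hpinj.mono Set.inter_subset_left)
  have e2 : (M.verts \ I).ncard ≤ (Iᶜ : Set V).ncard := by
    apply Set.ncard_le_ncard _ (Set.toFinite _)
    intro v hv
    exact hv.2
  have e3 : (M.verts ∩ I).ncard + (M.verts \ I).ncard = M.verts.ncard :=
    Set.ncard_inter_add_ncard_diff_eq_ncard M.verts I (Set.toFinite _)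
  have e4 : M.verts.ncard = 2 * matchNum G := by
    rw [matching_verts_ncard G M hM, hMcard]
  have e5 : U.ncard + (Uᶜ : Set V).ncard = Fintype.card V := by
    rw [Set.ncard_add_ncard_compl, Nat.card_eq_fintype_card]
  have e6 : I.ncard + (Iᶜ : Set V).ncard = Fintype.card V := by
    rw [Set.ncard_add_ncard_compl, Nat.card_eq_fintype_card]
  have e7 : M.verts.ncard ≤ Fintype.card V := by
    calc M.verts.ncard ≤ (Set.univ : Set V).ncard :=
          Set.ncard_le_ncard (Set.subset_univ _) (Set.toFinite _)
      _ = Fintype.card V := by rw [Set.ncard_univ, Nat.card_eq_fintype_card]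
  omega

end aux3

theorem stmt_11 [Fintype V] (G : SimpleGraph V)
    (Γ : Set (Set V)) (hΓ : Γ ⊆ Omega G) (hne : Γ.Nonempty) :
    2 * alpha G ≤ (⋃₀ Γ).ncard + (⋂₀ Γ).ncard ∧
      (⋃₀ Γ).ncard + (⋂₀ Γ).ncard ≤ 2 * (Fintype.card V - matchNum G) :=
  ⟨first_ineq G hΓ hne, second_ineq G hΓ⟩
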